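/- Call a trigonometric polynomial μ irreducible if in every factorization μ = γ·η into trigonometric polynomials, at least one of γ, η has degree (0,0). If μ is irreducible and ν is a trigonometric polynomial such that the set of common zeros {r ∈ [0,1)² : μ(r) = ν(r) = 0} is infinite, then μ divides ν. -/

import Mathlib

open MeasureTheory Set
open scoped Pointwise

noncomputable section

/-- The unit square `[0,1]²`. -/
def box : Set (ℝ × ℝ) := Set.Icc (0:ℝ) 1 ×ˢ Set.Icc (0:ℝ) 1

/-- The complex exponential `e^{2πi k·r}` with integer frequency `k`. -/
def e2 (k : ℤ × ℤ) (r : ℝ × ℝ) : ℂ :=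
  Complex.exp (2 * Real.pi * Complex.I * ((k.1 : ℂ) * (r.1 : ℂ) + (k.2 : ℂ) * (r.2 : ℂ)))

/-- The trigonometric sum with coefficient support `Λ` and coefficients `c`. -/
def trigSum (Λ : Finset (ℤ × ℤ)) (c : ℤ × ℤ → ℂ) : (ℝ × ℝ) → ℂ :=
  fun r => ∑ k ∈ Λ, c k * e2 k r

/-- The Fourier coefficient `f̂[m] = ∫_{[0,1]²} f(r) e^{-2πi m·r} dr`. -/
def fourierCoeff2 (f : ℝ × ℝ → ℂ) (m : ℤ × ℤ) : ℂ :=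
  ∫ r in box, f r * Complex.exp (-(2 * Real.pi * Complex.I *
    ((m.1 : ℂ) * (r.1 : ℂ) + (m.2 : ℂ) * (r.2 : ℂ))))

/-- `d` (supported on `Λ`) satisfies the annihilation equation for `f` at `ℓ`:
`∑_{k ∈ Λ} d[k] ⋅ 2πi (ℓ-k)_x ⋅ f̂[ℓ-k] = 0` and likewise for the `y`-component. -/
def Annihilates (Λ : Finset (ℤ × ℤ)) (d : ℤ × ℤ → ℂ) (f : ℝ × ℝ → ℂ) (ℓ : ℤ × ℤ) : Prop :=
  (∑ k ∈ Λ, d k * (2 * Real.pi * Complex.I * (((ℓ - k).1 : ℂ))) * fourierCoeff2 f (ℓ - k)) = 0 ∧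
  (∑ k ∈ Λ, d k * (2 * Real.pi * Complex.I * (((ℓ - k).2 : ℂ))) * fourierCoeff2 f (ℓ - k)) = 0

/-- `μ` is a (integer-frequency) trigonometric polynomial: a nonzero finite sum
`∑_{k ∈ Λ} c[k] e^{2πi k·r}`. -/
def IsTrigPolyFn (μ : ℝ × ℝ → ℂ) : Prop :=
  (∃ (Λ : Finset (ℤ × ℤ)) (c : ℤ × ℤ → ℂ), μ = trigSum Λ c) ∧ μ ≠ 0

/-- The zero set of `μ` in `[0,1]²`. -/
def zeroSetOn (μ : ℝ × ℝ → ℂ) : Set (ℝ × ℝ) := {r | r ∈ box ∧ μ r = 0}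

/-- `γ` divides `μ` among trigonometric polynomials. -/
def TrigDivides (γ μ : ℝ × ℝ → ℂ) : Prop :=
  ∃ η : ℝ × ℝ → ℂ, IsTrigPolyFn η ∧ μ = fun r => γ r * η r

/-- `C` is a trigonometric curve: the zero set in `[0,1]²` of a trigonometric polynomial,
infinite and with no isolated points. -/
def IsTrigCurve (C : Set (ℝ × ℝ)) : Prop :=
  (∃ μ : ℝ × ℝ → ℂ, IsTrigPolyFn μ ∧ C = zeroSetOn μ) ∧ C.Infinite ∧
    ∀ x ∈ C, AccPt x (Filter.principal C)

/-- `μ` is a minimal polynomial of the trigonometric curve `C`: a real-valued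
trigonometric polynomial whose zero set in `[0,1]²` is `C` and which divides every
trigonometric polynomial vanishing on `C`. -/
def IsMinPoly (μ : ℝ × ℝ → ℂ) (C : Set (ℝ × ℝ)) : Prop :=
  IsTrigPolyFn μ ∧ (∀ r, (μ r).im = 0) ∧ C = zeroSetOn μ ∧
    ∀ ν : ℝ × ℝ → ℂ, IsTrigPolyFn ν → (∀ r ∈ C, ν r = 0) → TrigDivides μ ν

/-- The contraction `Λ' ⊖ Λ = {ℓ : ℓ + k ∈ Λ' for all k ∈ Λ}` (as a finset; for
nonempty `Λ` this agrees with the set-theoretic contraction). -/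
def shrink (Λ' Λ : Finset (ℤ × ℤ)) : Finset (ℤ × ℤ) :=
  (Λ' - Λ).filter fun ℓ => ∀ k ∈ Λ, ℓ + k ∈ Λ'

/-- The degree of a trigonometric polynomial given by coefficients `c` on `Λ`: the side
lengths of the smallest closed axis-aligned rectangle containing the frequency support
`{k ∈ Λ : c[k] ≠ 0}`. -/
def degOf (Λ : Finset (ℤ × ℤ)) (c : ℤ × ℤ → ℂ) : ℤ × ℤ :=
  ((((Λ.filter fun k => c k ≠ 0).image Prod.fst).max.unbotD 0)
      - (((Λ.filter fun k => c k ≠ 0).image Prod.fst).min.untopD 0),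
   (((Λ.filter fun k => c k ≠ 0).image Prod.snd).max.unbotD 0)
      - (((Λ.filter fun k => c k ≠ 0).image Prod.snd).min.untopD 0))

/-- A trigonometric polynomial `μ` is irreducible if in every factorization `μ = γ·η`
into trigonometric polynomials, one of the factors has degree `(0,0)`. -/
def IsIrredTrig (μ : ℝ × ℝ → ℂ) : Prop :=
  ∀ (Λγ Λη : Finset (ℤ × ℤ)) (cγ cη : ℤ × ℤ → ℂ),
    trigSum Λγ cγ ≠ 0 → trigSum Λη cη ≠ 0 →
    μ = (fun r => trigSum Λγ cγ r * trigSum Λη cη r) →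
    degOf Λγ cγ = (0, 0) ∨ degOf Λη cη = (0, 0)

namespace S13
open Polynomial

def E (x : ℝ) : ℂ := Complex.exp (2 * Real.pi * Complex.I * x)

lemma E_ne_zero (x : ℝ) : E x ≠ 0 := Complex.exp_ne_zero _

abbrev P2 := Polynomial (Polynomial ℂ)

def ev2 (H : P2) (z w : ℂ) : ℂ := (H.map (evalRingHom z)).eval w

lemma ev2_mul (A B : P2) (z w : ℂ) : ev2 (A * B) z w = ev2 A z w * ev2 B z w := by
  simp [ev2, Polynomial.map_mul]

lemma ev2_add (A B : P2) (z w : ℂ) : ev2 (A + B) z w = ev2 A z w + ev2 B z w := by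
  simp [ev2, Polynomial.map_add]

lemma ev2_CC (q : Polynomial ℂ) (z w : ℂ) : ev2 (C q) z w = q.eval z := by
  simp [ev2]

lemma ev2_eq_sum (H : P2) (z w : ℂ) :
    ev2 H z w = ∑ j ∈ H.support, (H.coeff j).eval z * w ^ j := by
  rw [ev2, Polynomial.eval_map, Polynomial.eval₂_eq_sum, Polynomial.sum]
  simp

lemma E_injOn : Set.InjOn (fun x => E x) (Set.Ico (0:ℝ) 1) := by
  intro x hx y hy h
  simp only [E, Complex.exp_eq_exp_iff_exists_int] at h
  obtain ⟨n, hn⟩ := h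
  have h2 : (2 * Real.pi * Complex.I) ≠ 0 := by
    simp [Real.pi_ne_zero, Complex.I_ne_zero]
  have hxy : (x:ℂ) = (y:ℂ) + (n:ℝ) := by
    have h3 : (2 * Real.pi * Complex.I) * x = (2 * Real.pi * Complex.I) * ((y:ℂ) + (n:ℝ)) := by
      push_cast
      linear_combination hn
    exact mul_left_cancel₀ h2 h3
  have hxy' : x = y + (n:ℝ) := by exact_mod_cast hxy
  have hn1 : (-1:ℝ) < (n:ℝ) := by
    have := hx.1; have := hx.2; have := hy.1; have := hy.2; linarith
  have hn2 : (n:ℝ) < 1 := by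
    have := hx.1; have := hx.2; have := hy.1; have := hy.2; linarith
  have : n = 0 := by
    have a1 : (-1:ℤ) < n := by exact_mod_cast hn1
    have a2 : n < 1 := by exact_mod_cast hn2
    omega
  rw [hxy', this]; simp

lemma circle_infinite : (Set.range E).Infinite := by
  have h1 : (Set.Ico (0:ℝ) 1).Infinite := Set.Ico_infinite zero_lt_one
  have h2 : ((fun x => E x) '' (Set.Ico (0:ℝ) 1)).Infinite := h1.image E_injOn
  exact h2.mono (Set.image_subset_range _ _)

/-- A polynomial vanishing on the torus is zero. -/
lemma eq_zero_of_torus (H : P2) (h : ∀ x y : ℝ, ev2 H (E x) (E y) = 0) : H = 0 := by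
  have hmap : ∀ x : ℝ, H.map (evalRingHom (E x)) = 0 := by
    intro x
    apply Polynomial.eq_zero_of_infinite_isRoot
    apply circle_infinite.mono
    rintro w ⟨y, rfl⟩
    exact h x y
  have hcoeff : ∀ j : ℕ, H.coeff j = 0 := by
    intro j
    apply Polynomial.eq_zero_of_infinite_isRoot
    apply circle_infinite.mono
    rintro z ⟨x, rfl⟩
    have := hmap x
    have hc := congrArg (fun p => Polynomial.coeff p j) this
    simpa [Polynomial.coeff_map] using hc
  exact Polynomial.ext fun j => by rw [hcoeff j, Polynomial.coeff_zero]

lemma e2_eq (k : ℤ × ℤ) (r : ℝ × ℝ) : e2 k r = E r.1 ^ k.1 * E r.2 ^ k.2 := by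
  rw [e2, E, E, ← Complex.exp_int_mul, ← Complex.exp_int_mul, ← Complex.exp_add]
  congr 1
  ring

lemma zpow_add_nat (x : ℝ) (a : ℤ) (i : ℕ) : E x ^ (a + (i:ℤ)) = E x ^ a * E x ^ i := by
  rw [zpow_add₀ (E_ne_zero x), zpow_natCast]

/-- The polynomial associated to a trig sum with support `N` (all coeffs nonzero there),
shifted so exponents are `k - (a,b) ≥ 0`. -/
def toPoly (N : Finset (ℤ × ℤ)) (a b : ℤ) (c : ℤ × ℤ → ℂ) : P2 :=
  ∑ k ∈ N, C (C (c k) * X ^ (k.1 - a).toNat) * X ^ (k.2 - b).toNat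

lemma ev2_toPoly (N : Finset (ℤ × ℤ)) (a b : ℤ) (c : ℤ × ℤ → ℂ) (z w : ℂ) :
    ev2 (toPoly N a b c) z w
      = ∑ k ∈ N, c k * z ^ (k.1 - a).toNat * w ^ (k.2 - b).toNat := by
  rw [toPoly]
  rw [show (ev2 (∑ k ∈ N, C (C (c k) * X ^ (k.1 - a).toNat) * X ^ (k.2 - b).toNat) z w)
      = ∑ k ∈ N, ev2 (C (C (c k) * X ^ (k.1 - a).toNat) * X ^ (k.2 - b).toNat) z w by
    simp [ev2, Polynomial.map_sum, Polynomial.eval_finset_sum]]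
  refine Finset.sum_congr rfl fun k _ => ?_
  simp [ev2, Polynomial.map_mul, mul_assoc]

/-- Main representation identity. -/
lemma trigSum_eq_toPoly (Λ : Finset (ℤ × ℤ)) (c : ℤ × ℤ → ℂ) (a b : ℤ)
    (N : Finset (ℤ × ℤ)) (hN : N = Λ.filter fun k => c k ≠ 0)
    (hab : ∀ k ∈ N, a ≤ k.1 ∧ b ≤ k.2) (r : ℝ × ℝ) :
    trigSum Λ c r = E r.1 ^ a * E r.2 ^ b * ev2 (toPoly N a b c) (E r.1) (E r.2) := by
  rw [ev2_toPoly, Finset.mul_sum]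
  have : trigSum Λ c r = ∑ k ∈ N, c k * e2 k r := by
    rw [trigSum, hN, Finset.sum_filter]
    refine Finset.sum_congr rfl fun k _ => ?_
    by_cases h : c k = 0 <;> simp [h]
  rw [this]
  refine Finset.sum_congr rfl fun k hk => ?_
  obtain ⟨h1, h2⟩ := hab k hk
  rw [e2_eq]
  have e1 : E r.1 ^ k.1 = E r.1 ^ a * E r.1 ^ (k.1 - a).toNat := by
    rw [← zpow_add_nat, Int.toNat_of_nonneg (by omega)]
    congr 1; omega
  have e2' : E r.2 ^ k.2 = E r.2 ^ b * E r.2 ^ (k.2 - b).toNat := by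
    rw [← zpow_add_nat, Int.toNat_of_nonneg (by omega)]
    congr 1; omega
  rw [e1, e2']
  ring

lemma toPoly_coeff (N : Finset (ℤ × ℤ)) (a b : ℤ) (c : ℤ × ℤ → ℂ)
    (hab : ∀ k ∈ N, a ≤ k.1 ∧ b ≤ k.2) (i j : ℕ) :
    ((toPoly N a b c).coeff j).coeff i
      = if (a + i, b + j) ∈ N then c (a + i, b + j) else 0 := by
  rw [toPoly, Polynomial.finset_sum_coeff, Polynomial.finset_sum_coeff]
  have hterm : ∀ k ∈ N,
      ((C (C (c k) * X ^ (k.1 - a).toNat) * X ^ (k.2 - b).toNat).coeff j).coeff i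
        = if k = (a + i, b + j) then c k else 0 := by
    intro k hk
    obtain ⟨h1, h2⟩ := hab k hk
    rw [Polynomial.coeff_C_mul_X_pow]
    by_cases hj : k = (a + (i:ℤ), b + (j:ℤ))
    · have : (k.2 - b).toNat = j := by rw [hj]; omega
      rw [if_pos hj, this, if_pos rfl]
      have : (k.1 - a).toNat = i := by rw [hj]; omega
      rw [this, Polynomial.coeff_C_mul, Polynomial.coeff_X_pow, if_pos rfl, mul_one]
    · rw [if_neg hj]
      by_cases hj2 : j = (k.2 - b).toNat
      · rw [if_pos hj2, Polynomial.coeff_C_mul, Polynomial.coeff_X_pow]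
        have hne : i ≠ (k.1 - a).toNat := by
          intro hi
          apply hj
          have : k.1 = a + i := by omega
          have : k.2 = b + j := by omega
          ext <;> omega
        rw [if_neg hne, mul_zero]
      · rw [if_neg hj2, Polynomial.coeff_zero]
  rw [Finset.sum_congr rfl hterm, Finset.sum_ite_eq' N (a + (i:ℤ), b + (j:ℤ)) c]

def Λof (H : P2) (s t : ℤ) : Finset (ℤ × ℤ) :=
  H.support.biUnion fun j => (H.coeff j).support.image fun i : ℕ => (s + (i:ℤ), t + (j:ℤ))

def cof (H : P2) (s t : ℤ) : ℤ × ℤ → ℂ := fun k =>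
  if 0 ≤ k.1 - s ∧ 0 ≤ k.2 - t then (H.coeff (k.2 - t).toNat).coeff (k.1 - s).toNat else 0

lemma eval_eq_support_sum (q : Polynomial ℂ) (z : ℂ) :
    q.eval z = ∑ i ∈ q.support, q.coeff i * z ^ i := by
  rw [Polynomial.eval_eq_sum, Polynomial.sum]

lemma cof_apply (H : P2) (s t : ℤ) (i j : ℕ) :
    cof H s t ((s + i : ℤ), (t + j : ℤ)) = (H.coeff j).coeff i := by
  rw [cof]
  have h1 : (0:ℤ) ≤ s + i - s ∧ (0:ℤ) ≤ t + j - t := by constructor <;> omega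
  rw [if_pos h1, show ((t + (j:ℤ)) - t).toNat = j by omega,
    show ((s + (i:ℤ)) - s).toNat = i by omega]

lemma trigSum_Λof (H : P2) (s t : ℤ) (r : ℝ × ℝ) :
    trigSum (Λof H s t) (cof H s t) r
      = E r.1 ^ s * E r.2 ^ t * ev2 H (E r.1) (E r.2) := by
  rw [trigSum, Λof, Finset.sum_biUnion]
  · rw [ev2_eq_sum]
    conv_rhs => rw [Finset.mul_sum]
    refine Finset.sum_congr rfl fun j hj => ?_
    rw [Finset.sum_image (g := fun i : ℕ => (s + (i:ℤ), t + (j:ℤ)))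
      (fun x _ y _ h => by
        simp only [Prod.mk.injEq] at h
        omega)]
    rw [eval_eq_support_sum]
    conv_rhs => rw [Finset.sum_mul, Finset.mul_sum]
    refine Finset.sum_congr rfl fun i hi => ?_
    rw [cof_apply, e2_eq]
    have ha : E r.1 ^ ((s + i : ℤ), (t + j : ℤ)).1 = E r.1 ^ s * E r.1 ^ i := zpow_add_nat r.1 s i
    have hb : E r.2 ^ ((s + i : ℤ), (t + j : ℤ)).2 = E r.2 ^ t * E r.2 ^ j := zpow_add_nat r.2 t j
    rw [ha, hb]
    ring
  · intro x hx y hy hxy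
    simp only [Finset.disjoint_left]
    intro k hk1 hk2
    simp only [Finset.mem_image] at hk1 hk2
    obtain ⟨i1, _, h1⟩ := hk1
    obtain ⟨i2, _, h2⟩ := hk2
    apply hxy
    have h3 := (Prod.ext_iff.mp (h1.trans h2.symm)).2
    omega

lemma mem_Λof {H : P2} {s t : ℤ} {k : ℤ × ℤ} :
    k ∈ Λof H s t ↔ ∃ j ∈ H.support, ∃ i ∈ (H.coeff j).support, (s + (i:ℤ), t + (j:ℤ)) = k := by
  simp [Λof]

lemma trig_Λof_ne_zero (H : P2) (hH : H ≠ 0) (s t : ℤ) :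
    trigSum (Λof H s t) (cof H s t) ≠ 0 := by
  intro h0
  apply hH
  apply eq_zero_of_torus
  intro x y
  have h1 := congrFun h0 (x, y)
  rw [trigSum_Λof] at h1
  simp only [Pi.zero_apply] at h1
  rcases mul_eq_zero.mp h1 with h | h
  · rcases mul_eq_zero.mp h with h | h
    · exact absurd h (zpow_ne_zero _ (E_ne_zero x))
    · exact absurd h (zpow_ne_zero _ (E_ne_zero y))
  · exact h

lemma support_subset_singleton_eq {R : Type*} [CommSemiring R] (p : Polynomial R) (n : ℕ)
    (h : p.support ⊆ {n}) : p = C (p.coeff n) * X ^ n := by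
  ext m
  rw [Polynomial.coeff_C_mul_X_pow]
  by_cases hm : m = n
  · subst hm; simp
  · rw [if_neg hm]
    by_contra hc
    have : m ∈ p.support := Polynomial.mem_support_iff.mpr fun h0 => hc (h0 ▸ rfl)
    exact hm (Finset.mem_singleton.mp (h this))

lemma monomial_of_degOf_zero (H : P2) (hH : H ≠ 0) (s t : ℤ)
    (hdeg : degOf (Λof H s t) (cof H s t) = (0, 0)) :
    ∃ (α : ℂ) (i j : ℕ), α ≠ 0 ∧ H = C (C α * X ^ i) * X ^ j := by
  have hfil : (Λof H s t).filter (fun k => cof H s t k ≠ 0) = Λof H s t := by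
    apply Finset.filter_true_of_mem
    intro k hk
    obtain ⟨j, hj, i, hi, rfl⟩ := mem_Λof.mp hk
    rw [cof_apply]
    exact Polynomial.mem_support_iff.mp hi
  obtain ⟨j0, hj0⟩ := Polynomial.support_nonempty.mpr hH
  obtain ⟨i0, hi0⟩ := Polynomial.support_nonempty.mpr (Polynomial.mem_support_iff.mp hj0)
  have hk0 : (s + (i0:ℤ), t + (j0:ℤ)) ∈ Λof H s t :=
    mem_Λof.mpr ⟨j0, hj0, i0, hi0, rfl⟩
  -- all elements of Λof are equal
  have hall : ∀ k ∈ Λof H s t, k = (s + (i0:ℤ), t + (j0:ℤ)) := by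
    intro k hk
    rw [degOf, hfil, Prod.mk.injEq] at hdeg
    have hne1 : ((Λof H s t).image Prod.fst).Nonempty := ⟨k.1, Finset.mem_image_of_mem _ hk⟩
    have hne2 : ((Λof H s t).image Prod.snd).Nonempty := ⟨k.2, Finset.mem_image_of_mem _ hk⟩
    have e1 : ((Λof H s t).image Prod.fst).max = ((Λof H s t).image Prod.fst).max' hne1 :=
      (Finset.coe_max' hne1).symm
    have e2 : ((Λof H s t).image Prod.fst).min = ((Λof H s t).image Prod.fst).min' hne1 :=
      (Finset.coe_min' hne1).symm
    have e3 : ((Λof H s t).image Prod.snd).max = ((Λof H s t).image Prod.snd).max' hne2 :=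
      (Finset.coe_max' hne2).symm
    have e4 : ((Λof H s t).image Prod.snd).min = ((Λof H s t).image Prod.snd).min' hne2 :=
      (Finset.coe_min' hne2).symm
    rw [e1, e2, e3, e4] at hdeg
    simp only [WithBot.unbotD_coe, WithTop.untopD_coe] at hdeg
    have hfst : ∀ x ∈ (Λof H s t).image Prod.fst, ∀ y ∈ (Λof H s t).image Prod.fst, x = y := by
      intro x hx y hy
      have l1 := Finset.min'_le _ x hx
      have l2 := Finset.le_max' _ x hx
      have l3 := Finset.min'_le _ y hy
      have l4 := Finset.le_max' _ y hy
      omega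
    have hsnd : ∀ x ∈ (Λof H s t).image Prod.snd, ∀ y ∈ (Λof H s t).image Prod.snd, x = y := by
      intro x hx y hy
      have l1 := Finset.min'_le _ x hx
      have l2 := Finset.le_max' _ x hx
      have l3 := Finset.min'_le _ y hy
      have l4 := Finset.le_max' _ y hy
      omega
    have h1 := hfst k.1 (Finset.mem_image_of_mem _ hk) _ (Finset.mem_image_of_mem _ hk0)
    have h2 := hsnd k.2 (Finset.mem_image_of_mem _ hk) _ (Finset.mem_image_of_mem _ hk0)
    exact Prod.ext h1 h2
  have hsupp : H.support ⊆ {j0} := by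
    intro j hj
    obtain ⟨i, hi⟩ := Polynomial.support_nonempty.mpr (Polynomial.mem_support_iff.mp hj)
    have := hall _ (mem_Λof.mpr ⟨j, hj, i, hi, rfl⟩)
    rw [Prod.mk.injEq] at this
    have : j = j0 := by omega
    simp [this]
  have hsupp2 : (H.coeff j0).support ⊆ {i0} := by
    intro i hi
    have := hall _ (mem_Λof.mpr ⟨j0, hj0, i, hi, rfl⟩)
    rw [Prod.mk.injEq] at this
    have : i = i0 := by omega
    simp [this]
  refine ⟨(H.coeff j0).coeff i0, i0, j0, Polynomial.mem_support_iff.mp hi0, ?_⟩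
  have h1 := support_subset_singleton_eq H j0 hsupp
  have h2 := support_subset_singleton_eq (H.coeff j0) i0 hsupp2
  conv_lhs => rw [h1, h2]

lemma irr_transfer (μ : ℝ × ℝ → ℂ) (hirr : IsIrredTrig μ)
    (P : P2) (a b : ℤ) (hrep : ∀ r, μ r = E r.1 ^ a * E r.2 ^ b * ev2 P (E r.1) (E r.2))
    (hP0 : P ≠ 0)
    (hz : ¬ (C (X : Polynomial ℂ) ∣ P)) (hw : ¬ ((X : P2) ∣ P)) (hnu : ¬ IsUnit P) :
    Irreducible P := by
  refine ⟨hnu, fun A B hAB => ?_⟩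
  have hA0 : A ≠ 0 := fun h => hP0 (by rw [hAB, h, zero_mul])
  have hB0 : B ≠ 0 := fun h => hP0 (by rw [hAB, h, mul_zero])
  have hfact : μ = fun r =>
      trigSum (Λof A a b) (cof A a b) r * trigSum (Λof B 0 0) (cof B 0 0) r := by
    funext r
    rw [hrep r, trigSum_Λof, trigSum_Λof, hAB, ev2_mul]
    simp only [zpow_zero, one_mul]
    ring
  rcases hirr _ _ _ _ (trig_Λof_ne_zero A hA0 a b) (trig_Λof_ne_zero B hB0 0 0) hfact with h | h
  · obtain ⟨α, i, j, hα, rfl⟩ := monomial_of_degOf_zero A hA0 a b h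
    left
    have hi : i = 0 := by
      by_contra hi
      apply hz
      have h1 : (X : Polynomial ℂ) ∣ C α * X ^ i := Dvd.dvd.mul_left (dvd_pow_self X hi) _
      have h2 : C (X : Polynomial ℂ) ∣ C (C α * X ^ i) := by
          obtain ⟨q, hq⟩ := h1; exact ⟨C q, by rw [hq, map_mul]⟩
      calc C (X : Polynomial ℂ) ∣ C (C α * X ^ i) * X ^ j := h2.mul_right _
        _ ∣ P := ⟨B, hAB⟩
    have hj : j = 0 := by
      by_contra hj
      apply hw
      have h2 : (X : P2) ∣ C (C α * X ^ i) * X ^ j :=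
        Dvd.dvd.mul_left (dvd_pow_self X hj) _
      calc (X : P2) ∣ C (C α * X ^ i) * X ^ j := h2
        _ ∣ P := ⟨B, hAB⟩
    subst hi hj
    simp only [pow_zero, mul_one]
    exact Polynomial.isUnit_C.mpr (Polynomial.isUnit_C.mpr (isUnit_iff_ne_zero.mpr hα))
  · obtain ⟨α, i, j, hα, rfl⟩ := monomial_of_degOf_zero B hB0 0 0 h
    right
    have hi : i = 0 := by
      by_contra hi
      apply hz
      have h1 : (X : Polynomial ℂ) ∣ C α * X ^ i := Dvd.dvd.mul_left (dvd_pow_self X hi) _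
      have h2 : C (X : Polynomial ℂ) ∣ C (C α * X ^ i) := by
          obtain ⟨q, hq⟩ := h1; exact ⟨C q, by rw [hq, map_mul]⟩
      calc C (X : Polynomial ℂ) ∣ C (C α * X ^ i) * X ^ j := h2.mul_right _
        _ ∣ P := Dvd.intro_left A hAB.symm
    have hj : j = 0 := by
      by_contra hj
      apply hw
      have h2 : (X : P2) ∣ C (C α * X ^ i) * X ^ j :=
        Dvd.dvd.mul_left (dvd_pow_self X hj) _
      calc (X : P2) ∣ C (C α * X ^ i) * X ^ j := h2
        _ ∣ P := Dvd.intro_left A hAB.symm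
    subst hi hj
    simp only [pow_zero, mul_one]
    exact Polynomial.isUnit_C.mpr (Polynomial.isUnit_C.mpr (isUnit_iff_ne_zero.mpr hα))

lemma C_X_sub_dvd (H : P2) (z0 : ℂ) (h : H.map (evalRingHom z0) = 0) : C (X - C z0) ∣ H := by
  rw [Polynomial.C_dvd_iff_dvd_coeff]
  intro j
  rw [Polynomial.dvd_iff_isRoot]
  have := congrArg (fun p => p.coeff j) h
  simpa [Polynomial.coeff_map] using this

lemma finite_helper (S : Set (ℂ × ℂ)) (Z : Set ℂ) (hZ : Z.Finite)
    (F : ℂ → Polynomial ℂ) (hF : ∀ z ∈ Z, F z ≠ 0)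
    (h1 : ∀ p ∈ S, p.1 ∈ Z) (h2 : ∀ p ∈ S, (F p.1).IsRoot p.2) : S.Finite := by
  have hsub : S ⊆ ⋃ z ∈ Z, (fun w => (z, w)) '' {w | (F z).IsRoot w} := by
    rintro ⟨z, w⟩ hp
    exact Set.mem_biUnion (h1 _ hp) ⟨w, h2 _ hp, rfl⟩
  exact Set.Finite.subset
    (hZ.biUnion fun z hz => (Polynomial.finite_setOf_isRoot (hF z hz)).image _) hsub

lemma dvd_of_infinite_common (P Q : P2) (hP : Irreducible P) (hQ0 : Q ≠ 0)
    (hinf : {zw : ℂ × ℂ | ev2 P zw.1 zw.2 = 0 ∧ ev2 Q zw.1 zw.2 = 0}.Infinite) : P ∣ Q := by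
  by_contra hndvd
  apply hinf
  set S := {zw : ℂ × ℂ | ev2 P zw.1 zw.2 = 0 ∧ ev2 Q zw.1 zw.2 = 0} with hS
  by_cases hdeg : P.natDegree = 0
  · obtain ⟨p, hp⟩ : ∃ p, C p = P := Polynomial.natDegree_eq_zero.mp hdeg
    have hpIrr : Irreducible p := by
      constructor
      · intro h; exact hP.not_isUnit (hp ▸ Polynomial.isUnit_C.mpr h)
      · intro a b hab
        have : P = C a * C b := by rw [← hp, hab, map_mul]
        rcases hP.isUnit_or_isUnit this with h | h
        · exact Or.inl (Polynomial.isUnit_C.mp h)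
        · exact Or.inr (Polynomial.isUnit_C.mp h)
    have hpdvd : ∀ z0 : ℂ, p.IsRoot z0 → p ∣ (X - C z0) := by
      intro z0 hz0
      obtain ⟨r, hr⟩ := Polynomial.dvd_iff_isRoot.mpr hz0
      have hp0 : p ≠ 0 := hpIrr.ne_zero
      have hr0 : r ≠ 0 := by rintro rfl; rw [mul_zero] at hr; exact hp0 hr
      have hdr : r.degree = 0 := by
        have h1 : p.degree = 1 := IsAlgClosed.degree_eq_one_of_irreducible ℂ hpIrr
        have h2 : p.degree = (X - C z0).degree + r.degree := by rw [hr, Polynomial.degree_mul]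
        rw [h1, Polynomial.degree_X_sub_C, Polynomial.degree_eq_natDegree hr0] at h2
        have h3 : (1 : WithBot ℕ) = ((1 + r.natDegree : ℕ) : WithBot ℕ) := by
          rw [h2]; push_cast; ring
        have h4 : 1 = 1 + r.natDegree := by exact_mod_cast h3
        have h5 : r.natDegree = 0 := by omega
        rw [Polynomial.degree_eq_natDegree hr0, h5]
        exact_mod_cast rfl
      have hu : IsUnit r := Polynomial.isUnit_iff_degree_eq_zero.mpr hdr
      have hassoc : Associated (X - C z0) p := ⟨hu.unit, by rw [IsUnit.unit_spec, hr]⟩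
      exact hassoc.symm.dvd
    refine finite_helper S {z | p.IsRoot z} (Polynomial.finite_setOf_isRoot hpIrr.ne_zero)
      (fun z => Q.map (evalRingHom z)) ?_ ?_ ?_
    · intro z hz h0
      apply hndvd
      have h1 : C (X - C z) ∣ Q := C_X_sub_dvd Q z h0
      have h2 : C p ∣ C (X - C z) := by
          obtain ⟨q, hq⟩ := hpdvd z hz; exact ⟨C q, by rw [hq, map_mul]⟩
      exact hp ▸ h2.trans h1
    · rintro ⟨z, w⟩ hzw
      have := hzw.1
      rw [← hp, ev2_CC] at this
      exact this
    · rintro ⟨z, w⟩ hzw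
      exact hzw.2
  · have hP0 : P ≠ 0 := hP.ne_zero
    have hprim : P.IsPrimitive := by
      intro r hr
      obtain ⟨h, hh⟩ := hr
      rcases hP.isUnit_or_isUnit hh with h1 | h1
      · exact Polynomial.isUnit_C.mp h1
      · exfalso
        apply hdeg
        have hr0 : C r ≠ 0 := fun h0 => hP0 (by rw [hh, h0, zero_mul])
        have hh0 : h ≠ 0 := fun h0 => hP0 (by rw [hh, h0, mul_zero])
        rw [hh, Polynomial.natDegree_mul hr0 hh0, Polynomial.natDegree_C,
          Polynomial.natDegree_eq_zero_of_isUnit h1]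
    set K := RatFunc ℂ with hK
    set φ := algebraMap (Polynomial ℂ) K with hφ
    have hinj : Function.Injective φ := IsFractionRing.injective _ _
    have hPm : Irreducible (P.map φ) :=
      (hprim.irreducible_iff_irreducible_map_fraction_map (K := K)).mp hP
    have hndvdm : ¬ (P.map φ ∣ Q.map φ) := by
      intro hd
      apply hndvd
      have hc0 : φ Q.content ≠ 0 := fun h =>
        hQ0 (Polynomial.content_eq_zero_iff.mp (hinj (by rw [h, map_zero])))
      have hu : IsUnit (C (φ Q.content)) := Polynomial.isUnit_C.mpr (isUnit_iff_ne_zero.mpr hc0)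
      have h2 : Q.map φ = C (φ Q.content) * Q.primPart.map φ := by
        conv_lhs => rw [Q.eq_C_content_mul_primPart]
        rw [Polynomial.map_mul, Polynomial.map_C]
      rw [h2] at hd
      have h3 : P.map φ ∣ Q.primPart.map φ := (hu.dvd_mul_left).mp hd
      exact (hprim.dvd_of_fraction_map_dvd_fraction_map h3).trans
        Q.primPart_dvd
    obtain ⟨u, v, huv⟩ := hPm.coprime_iff_not_dvd.mpr hndvdm
    obtain ⟨du, hdu⟩ :=
      IsLocalization.integerNormalization_map_to_map (nonZeroDivisors (Polynomial ℂ)) u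
    obtain ⟨dv, hdv⟩ :=
      IsLocalization.integerNormalization_map_to_map (nonZeroDivisors (Polynomial ℂ)) v
    set A := IsLocalization.integerNormalization (nonZeroDivisors (Polynomial ℂ)) u with hA
    set B := IsLocalization.integerNormalization (nonZeroDivisors (Polynomial ℂ)) v with hB
    have hsmul : ∀ (r : Polynomial ℂ) (f : Polynomial K), r • f = C (φ r) * f := by
      intro r f
      ext i
      rw [Polynomial.coeff_smul, Polynomial.coeff_C_mul, Algebra.smul_def]
    rw [hsmul] at hdu hdv
    set d : Polynomial ℂ := (du : Polynomial ℂ) * (dv : Polynomial ℂ) with hd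
    have hd0 : d ≠ 0 :=
      mul_ne_zero (nonZeroDivisors.coe_ne_zero du) (nonZeroDivisors.coe_ne_zero dv)
    have key : (C (dv : Polynomial ℂ) * A) * P + (C (du : Polynomial ℂ) * B) * Q = C d := by
      apply Polynomial.map_injective φ hinj
      simp only [Polynomial.map_add, Polynomial.map_mul, Polynomial.map_C]
      rw [hdu, hdv]
      calc C (φ dv) * (C (φ du) * u) * P.map φ + C (φ du) * (C (φ dv) * v) * Q.map φ
          = C (φ du) * C (φ dv) * (u * P.map φ + v * Q.map φ) := by ring
        _ = C (φ d) := by rw [huv, mul_one, hd]; simp [map_mul]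
    refine finite_helper S {z | d.IsRoot z} (Polynomial.finite_setOf_isRoot hd0)
      (fun z => P.map (evalRingHom z)) ?_ ?_ ?_
    · intro z hz h0
      have h1 : C (X - C z) ∣ P := C_X_sub_dvd P z h0
      obtain ⟨e, he⟩ := h1
      rcases hP.isUnit_or_isUnit he with h2 | h2
      · exact Polynomial.not_isUnit_X_sub_C z (Polynomial.isUnit_C.mp h2)
      · apply hdeg
        have he1 : (C (X - C z) : P2) ≠ 0 := fun h3 => hP0 (by rw [he, h3, zero_mul])
        have he2 : e ≠ 0 := fun h3 => hP0 (by rw [he, h3, mul_zero])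
        rw [he, Polynomial.natDegree_mul he1 he2, Polynomial.natDegree_C,
          Polynomial.natDegree_eq_zero_of_isUnit h2]
    · rintro ⟨z, w⟩ hzw
      obtain ⟨hz1, hz2⟩ := hzw
      have e0 : ev2 (C d) z w = 0 := by
        rw [← key]
        simp only [ev2_add, ev2_mul]
        rw [hz1, hz2]
        ring
      rw [ev2_CC] at e0
      simpa using e0
    · rintro ⟨z, w⟩ hzw
      exact hzw.1

lemma exists_rep (Λ : Finset (ℤ × ℤ)) (c : ℤ × ℤ → ℂ) (hne : trigSum Λ c ≠ 0) :
    ∃ (P : P2) (a b : ℤ), P ≠ 0 ∧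
      (∀ r, trigSum Λ c r = E r.1 ^ a * E r.2 ^ b * ev2 P (E r.1) (E r.2)) ∧
      ¬ (C (X : Polynomial ℂ) ∣ P) ∧ ¬ ((X : P2) ∣ P) := by
  set N := Λ.filter (fun k => c k ≠ 0) with hN
  have hNne : N.Nonempty := by
    by_contra h
    apply hne
    funext r
    rw [trigSum]
    apply Finset.sum_eq_zero
    intro k hk
    have : c k = 0 := by
      by_contra hck
      exact h ⟨k, Finset.mem_filter.mpr ⟨hk, hck⟩⟩
    rw [this, zero_mul]
  have hne1 : (N.image Prod.fst).Nonempty := hNne.image _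
  have hne2 : (N.image Prod.snd).Nonempty := hNne.image _
  set a := (N.image Prod.fst).min' hne1 with ha
  set b := (N.image Prod.snd).min' hne2 with hb
  have hab : ∀ k ∈ N, a ≤ k.1 ∧ b ≤ k.2 := fun k hk =>
    ⟨Finset.min'_le _ _ (Finset.mem_image_of_mem _ hk),
     Finset.min'_le _ _ (Finset.mem_image_of_mem _ hk)⟩
  set P := toPoly N a b c with hP
  have hrep := fun r => trigSum_eq_toPoly Λ c a b N hN hab r
  have hP0 : P ≠ 0 := by
    intro h0
    apply hne
    funext r
    rw [hrep r, ← hP, h0]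
    simp [ev2]
  obtain ⟨ka, hka, hka1⟩ : ∃ k ∈ N, k.1 = a := by
    obtain ⟨k, hk, hk1⟩ := Finset.mem_image.mp (Finset.min'_mem _ hne1)
    exact ⟨k, hk, hk1⟩
  obtain ⟨kb, hkb, hkb2⟩ : ∃ k ∈ N, k.2 = b := by
    obtain ⟨k, hk, hk1⟩ := Finset.mem_image.mp (Finset.min'_mem _ hne2)
    exact ⟨k, hk, hk1⟩
  refine ⟨P, a, b, hP0, hrep, ?_, ?_⟩
  · intro hdvd
    rw [Polynomial.C_dvd_iff_dvd_coeff] at hdvd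
    have h1 := hdvd ((ka.2 - b).toNat)
    rw [Polynomial.X_dvd_iff] at h1
    rw [hP, toPoly_coeff N a b c hab 0 ((ka.2 - b).toNat)] at h1
    have hb2 : b ≤ ka.2 := (hab ka hka).2
    have : (a + (0:ℕ), b + ((ka.2 - b).toNat : ℤ)) = ka := by
      ext
      · simp [hka1]
      · simp only []
        omega
    rw [this, if_pos hka] at h1
    exact (Finset.mem_filter.mp hka).2 h1
  · intro hdvd
    rw [Polynomial.X_dvd_iff] at hdvd
    have h1 := congrArg (fun q => q.coeff ((kb.1 - a).toNat)) hdvd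
    simp only [Polynomial.coeff_zero] at h1
    rw [hP, toPoly_coeff N a b c hab ((kb.1 - a).toNat) 0] at h1
    have ha2 : a ≤ kb.1 := (hab kb hkb).1
    have : (a + ((kb.1 - a).toNat : ℤ), b + (0:ℕ)) = kb := by
      ext
      · simp only []
        omega
      · simp [hkb2]
    rw [this, if_pos hkb] at h1
    exact (Finset.mem_filter.mp hkb).2 h1

end S13

open S13

/-- If `μ` is an irreducible trigonometric polynomial and `ν` a
trigonometric polynomial with infinitely many common zeros with `μ` in `[0,1)²`, then
`μ` divides `ν`. -/
theorem stmt13 (μ ν : ℝ × ℝ → ℂ) (hμ : IsTrigPolyFn μ) (hν : IsTrigPolyFn ν)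
    (hirr : IsIrredTrig μ)
    (hinf : {r : ℝ × ℝ | r ∈ Set.Ico (0:ℝ) 1 ×ˢ Set.Ico (0:ℝ) 1 ∧
      μ r = 0 ∧ ν r = 0}.Infinite) :
    TrigDivides μ ν := by
  obtain ⟨⟨Λμ, cμ, hμeq⟩, hμ0⟩ := hμ
  obtain ⟨⟨Λν, cν, hνeq⟩, hν0⟩ := hν
  obtain ⟨P, a, b, hP0, hPrep, hz, hw⟩ := exists_rep Λμ cμ (hμeq ▸ hμ0)
  obtain ⟨Q, a', b', hQ0, hQrep, -, -⟩ := exists_rep Λν cν (hνeq ▸ hν0)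
  have hPrep' : ∀ r, μ r = E r.1 ^ a * E r.2 ^ b * ev2 P (E r.1) (E r.2) := by
    intro r; rw [hμeq]; exact hPrep r
  have hQrep' : ∀ r, ν r = E r.1 ^ a' * E r.2 ^ b' * ev2 Q (E r.1) (E r.2) := by
    intro r; rw [hνeq]; exact hQrep r
  -- zeros of μ are zeros of ev2 P, etc.
  have hμz : ∀ r : ℝ × ℝ, μ r = 0 → ev2 P (E r.1) (E r.2) = 0 := by
    intro r h0
    rw [hPrep' r] at h0
    rcases mul_eq_zero.mp h0 with h | h
    · rcases mul_eq_zero.mp h with h | h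
      · exact absurd h (zpow_ne_zero _ (E_ne_zero _))
      · exact absurd h (zpow_ne_zero _ (E_ne_zero _))
    · exact h
  have hνz : ∀ r : ℝ × ℝ, ν r = 0 → ev2 Q (E r.1) (E r.2) = 0 := by
    intro r h0
    rw [hQrep' r] at h0
    rcases mul_eq_zero.mp h0 with h | h
    · rcases mul_eq_zero.mp h with h | h
      · exact absurd h (zpow_ne_zero _ (E_ne_zero _))
      · exact absurd h (zpow_ne_zero _ (E_ne_zero _))
    · exact h
  -- the complex common-zero set is infinite
  have hinfC : {zw : ℂ × ℂ | ev2 P zw.1 zw.2 = 0 ∧ ev2 Q zw.1 zw.2 = 0}.Infinite := by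
    have hinj : Set.InjOn (fun r : ℝ × ℝ => (E r.1, E r.2))
        {r : ℝ × ℝ | r ∈ Set.Ico (0:ℝ) 1 ×ˢ Set.Ico (0:ℝ) 1 ∧ μ r = 0 ∧ ν r = 0} := by
      intro r1 h1 r2 h2 he
      simp only [Prod.mk.injEq] at he
      have hb1 := h1.1
      have hb2 := h2.1
      rw [Set.mem_prod] at hb1 hb2
      ext
      · exact E_injOn hb1.1 hb2.1 he.1
      · exact E_injOn hb1.2 hb2.2 he.2
    have himg := hinf.image hinj
    apply himg.mono
    rintro zw ⟨r, ⟨-, hr2, hr3⟩, rfl⟩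
    exact ⟨hμz r hr2, hνz r hr3⟩
  -- a common zero point
  obtain ⟨r0, -, hr02, -⟩ := hinf.nonempty
  -- P is not a unit
  have hnu : ¬ IsUnit P := by
    intro hu
    obtain ⟨q, hq, hqP⟩ := Polynomial.isUnit_iff.mp hu
    obtain ⟨α, hα, hαq⟩ := Polynomial.isUnit_iff.mp hq
    have h0 := hμz r0 hr02
    rw [← hqP, ← hαq, ev2_CC, Polynomial.eval_C] at h0
    exact (isUnit_iff_ne_zero.mp hα) h0
  have hPirr : Irreducible P := irr_transfer μ hirr P a b hPrep' hP0 hz hw hnu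
  have hdvd : P ∣ Q := dvd_of_infinite_common P Q hPirr hQ0 hinfC
  obtain ⟨Hq, hHq⟩ := hdvd
  have hHq0 : Hq ≠ 0 := fun h => hQ0 (by rw [hHq, h, mul_zero])
  refine ⟨trigSum (Λof Hq (a' - a) (b' - b)) (cof Hq (a' - a) (b' - b)),
    ⟨⟨_, _, rfl⟩, trig_Λof_ne_zero Hq hHq0 _ _⟩, ?_⟩
  funext r
  rw [hQrep' r, trigSum_Λof, hPrep' r, hHq, ev2_mul]
  have e1 : E r.1 ^ a' = E r.1 ^ a * E r.1 ^ (a' - a) := by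
    rw [← zpow_add₀ (E_ne_zero _)]; congr 1; omega
  have e2 : E r.2 ^ b' = E r.2 ^ b * E r.2 ^ (b' - b) := by
    rw [← zpow_add₀ (E_ne_zero _)]; congr 1; omega
  rw [e1, e2]
  ring

end
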